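/- Under axioms (H1)–(H4), if h : A → X is a dagger monomorphism in C, then V(h) : V(A) → V(X) is an isometry of Hermitian spaces, its image M = {h ∘ u : u ∈ V(A)} is an orthoclosed subspace of V(X) with orthocomplement M⊥ = {u ∈ V(X) : h† ∘ u = 0}, and V(X) = M ⊕ M⊥. -/

import Mathlib

universe v u

open CategoryTheory CategoryTheory.Limits

/-- A dagger structure on a category: an involutive contravariant
identity-on-objects endofunctor. -/
class DaggerStruct (C : Type u) [Category.{v} C] where
  dag : ∀ {A B : C}, (A ⟶ B) → (B ⟶ A)
  dag_id : ∀ (A : C), dag (𝟙 A) = 𝟙 A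
  dag_comp : ∀ {A B D : C} (f : A ⟶ B) (g : B ⟶ D), dag (f ≫ g) = dag g ≫ dag f
  dag_dag : ∀ {A B : C} (f : A ⟶ B), dag (dag f) = f

/-- `f` is a dagger monomorphism: `f† ∘ f = id`. -/
def IsDagMono {C : Type u} [Category.{v} C] [DaggerStruct C] {A B : C} (f : A ⟶ B) : Prop :=
  f ≫ DaggerStruct.dag f = 𝟙 A

/-- The canonical semiadditive addition induced by binary biproducts:
`f + g = ∇ ∘ (f ⊕ g) ∘ Δ`. -/
noncomputable def daggerAdd {C : Type u} [Category.{v} C] [HasZeroMorphisms C] [HasBinaryBiproducts C]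
    {X Y : C} (f g : X ⟶ Y) : X ⟶ Y :=
  biprod.lift (𝟙 X) (𝟙 X) ≫ biprod.map f g ≫ biprod.desc (𝟙 Y) (𝟙 Y)

/-- `I` is dagger simple: nonzero, and every nonzero dagger monomorphism into `I`
is a dagger isomorphism. -/
def DagSimple {C : Type u} [Category.{v} C] [HasZeroMorphisms C] [DaggerStruct C]
    (I : C) : Prop :=
  ¬ IsZero I ∧ ∀ {A : C} (f : A ⟶ I), f ≠ 0 → IsDagMono f → DaggerStruct.dag f ≫ f = 𝟙 I


section Aux
variable {C : Type u} [Category.{v} C] [HasZeroMorphisms C] [HasBinaryBiproducts C]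

lemma comp_daggerAdd {W X Y : C} (v : W ⟶ X) (f g : X ⟶ Y) :
    v ≫ daggerAdd f g = daggerAdd (v ≫ f) (v ≫ g) := by
  unfold daggerAdd
  simp only [← Category.assoc]
  congr 1
  apply biprod.hom_ext <;> simp

lemma daggerAdd_comp {X Y Z : C} (f g : X ⟶ Y) (v : Y ⟶ Z) :
    daggerAdd f g ≫ v = daggerAdd (f ≫ v) (g ≫ v) := by
  unfold daggerAdd
  simp only [Category.assoc]
  congr 1
  have : biprod.map f g ≫ biprod.desc (𝟙 Y) (𝟙 Y) ≫ v
      = biprod.map (f ≫ v) (g ≫ v) ≫ biprod.desc (𝟙 Z) (𝟙 Z) := by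
    apply biprod.hom_ext' <;> simp
  rw [this]

lemma daggerAdd_zero {X Y : C} (f : X ⟶ Y) : daggerAdd f (0 : X ⟶ Y) = f := by
  unfold daggerAdd
  have h1 : biprod.lift (𝟙 X) (𝟙 X) ≫ biprod.map f (0 : X ⟶ Y) = f ≫ biprod.inl := by
    apply biprod.hom_ext <;> simp
  rw [← Category.assoc, h1, Category.assoc, biprod.inl_desc, Category.comp_id]

lemma zero_daggerAdd {X Y : C} (f : X ⟶ Y) : daggerAdd (0 : X ⟶ Y) f = f := by
  unfold daggerAdd
  have h1 : biprod.lift (𝟙 X) (𝟙 X) ≫ biprod.map (0 : X ⟶ Y) f = f ≫ biprod.inr := by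
    apply biprod.hom_ext <;> simp
  rw [← Category.assoc, h1, Category.assoc, biprod.inr_desc, Category.comp_id]

open ZeroObject in
lemma dag_zero {C : Type u} [Category.{v} C] [HasZeroObject C] [HasZeroMorphisms C]
    [DaggerStruct C] {P Q : C} : DaggerStruct.dag (0 : P ⟶ Q) = 0 := by
  have e : (0 : P ⟶ Q) = (0 : P ⟶ (0 : C)) ≫ (0 : (0 : C) ⟶ Q) := by simp
  rw [e, DaggerStruct.dag_comp]
  have : DaggerStruct.dag (0 : P ⟶ (0 : C)) = 0 := (isZero_zero C).eq_of_src _ _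
  rw [this, comp_zero]
end Aux

/-- Under (H1)–(H4), a dagger monomorphism `h : A ⟶ X` induces an isometry
`V(h)` of Hermitian spaces; its image `M` is orthoclosed with orthocomplement
`M⊥ = {u : h† ∘ u = 0}`, and `V(X) = M ⊕ M⊥`. -/
theorem stmt_16 {C : Type u} [Category.{v} C] [HasZeroObject C] [HasZeroMorphisms C]
    [HasBinaryBiproducts C] [DaggerStruct C]
    (hbip : ∀ X Y : C, DaggerStruct.dag (biprod.inl : X ⟶ X ⊞ Y) = biprod.fst ∧
        DaggerStruct.dag (biprod.inr : Y ⟶ X ⊞ Y) = biprod.snd)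
    (H2 : ∀ (J : Type v) [Preorder J] [IsDirected J (· ≤ ·)] [Nonempty J] (F : J ⥤ C),
      (∀ (i j : J) (h : i ≤ j), IsDagMono (F.map (homOfLE h))) →
      ∃ (X : C) (c : ∀ j : J, F.obj j ⟶ X),
        (∀ j, IsDagMono (c j)) ∧
        (∀ (i j : J) (h : i ≤ j), F.map (homOfLE h) ≫ c j = c i) ∧
        (∀ (Y : C) (d : ∀ j : J, F.obj j ⟶ Y), (∀ j, IsDagMono (d j)) →
          (∀ (i j : J) (h : i ≤ j), F.map (homOfLE h) ≫ d j = d i) →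
          ∃! m : X ⟶ Y, IsDagMono m ∧ ∀ j, c j ≫ m = d j) ∧
        (∀ (Y : C) (f g : X ⟶ Y), (∀ j, c j ≫ f = c j ≫ g) → f = g))
    (H3 : ∀ (A X : C) (f : A ⟶ X), IsDagMono f →
      ∃ (B : C) (g : B ⟶ X), IsDagMono g ∧ f ≫ DaggerStruct.dag g = 0 ∧
        Nonempty (IsColimit (BinaryCofan.mk f g)))
    (I : C) (hI : DagSimple I)
    (H4a : ∀ A : C, ¬ IsZero A → ∃ u : I ⟶ A, u ≠ 0)
    (H4b : ∀ (A : C) (u : I ⟶ A), u ≠ 0 → ∃ h : I ⟶ I, IsIso h ∧ IsDagMono (h ≫ u))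
    (A X : C) (h : A ⟶ X) (hmono : IsDagMono h) :
    -- V(h) is an isometry: it preserves the form
    (∀ u v : I ⟶ A, (u ≫ h) ≫ DaggerStruct.dag (v ≫ h) = u ≫ DaggerStruct.dag v) ∧
    -- M⊥ = ker V(h†): w ⊥ image V(h) iff h† ∘ w = 0
    (∀ w : I ⟶ X, (∀ u : I ⟶ A, w ≫ DaggerStruct.dag (u ≫ h) = 0) ↔
        w ≫ DaggerStruct.dag h = 0) ∧
    -- V(X) = M ⊕ M⊥: every w decomposes uniquely as m + m' with m ∈ M, m' ∈ M⊥
    (∀ w : I ⟶ X, ∃! p : (I ⟶ A) × (I ⟶ X),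
        p.2 ≫ DaggerStruct.dag h = 0 ∧ w = daggerAdd (p.1 ≫ h) p.2) ∧
    -- M is orthoclosed: M⊥⊥ ⊆ M
    (∀ w : I ⟶ X, (∀ w' : I ⟶ X, w' ≫ DaggerStruct.dag h = 0 →
        w ≫ DaggerStruct.dag w' = 0) → ∃ u : I ⟶ A, w = u ≫ h) := by

  classical
  -- basic dagger facts
  have dagc := @DaggerStruct.dag_comp C _ _
  have dagd := @DaggerStruct.dag_dag C _ _
  -- positive definiteness of the form
  have pos_def : ∀ {P : C} (x : I ⟶ P), x ≫ DaggerStruct.dag x = 0 → x = 0 := by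
    intro P x hx
    by_contra hne
    obtain ⟨h₀, _, hdm⟩ := H4b P x hne
    have hid : 𝟙 I = 0 := by
      calc 𝟙 I = (h₀ ≫ x) ≫ DaggerStruct.dag (h₀ ≫ x) := hdm.symm
        _ = h₀ ≫ (x ≫ DaggerStruct.dag x) ≫ DaggerStruct.dag h₀ := by
            rw [dagc]; simp only [Category.assoc]
        _ = 0 := by rw [hx]; simp
    exact hI.1 ((IsZero.iff_id_eq_zero I).mpr hid)
  -- orthogonal complement from H3
  obtain ⟨B, g, hg, hhg, ⟨hcolim⟩⟩ := H3 A X h hmono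
  have hgh : g ≫ DaggerStruct.dag h = 0 := by
    have := congrArg DaggerStruct.dag hhg
    rw [dagc, dagd, dag_zero] at this
    exact this
  -- joint epi-ness of h, g
  have hx_ext : ∀ {Y : C} (a b : X ⟶ Y), h ≫ a = h ≫ b → g ≫ a = g ≫ b → a = b := by
    intro Y a b h1 h2
    refine hcolim.hom_ext ?_
    rintro ⟨(_ | _)⟩
    · exact h1
    · exact h2
  -- the decomposition of the identity
  have decomp : daggerAdd (DaggerStruct.dag h ≫ h) (DaggerStruct.dag g ≫ g) = 𝟙 X := by
    apply hx_ext
    · rw [comp_daggerAdd, Category.comp_id, ← Category.assoc, ← Category.assoc,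
        hmono, hhg, Category.id_comp, zero_comp, daggerAdd_zero]
    · rw [comp_daggerAdd, Category.comp_id, ← Category.assoc, ← Category.assoc,
        hg, hgh, Category.id_comp, zero_comp, zero_daggerAdd]
  have decompw : ∀ w : I ⟶ X,
      w = daggerAdd ((w ≫ DaggerStruct.dag h) ≫ h) ((w ≫ DaggerStruct.dag g) ≫ g) := by
    intro w
    conv_lhs => rw [← Category.comp_id w, ← decomp, comp_daggerAdd]
    simp only [Category.assoc]
  -- joint mono-ness of dag h, dag g on points of I
  have point_ext : ∀ u v : I ⟶ X, u ≫ DaggerStruct.dag h = v ≫ DaggerStruct.dag h →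
      u ≫ DaggerStruct.dag g = v ≫ DaggerStruct.dag g → u = v := by
    intro u v e1 e2
    have d1 : h ≫ DaggerStruct.dag u = h ≫ DaggerStruct.dag v := by
      have := congrArg DaggerStruct.dag e1
      rwa [dagc, dagc, dagd] at this
    have d2 : g ≫ DaggerStruct.dag u = g ≫ DaggerStruct.dag v := by
      have := congrArg DaggerStruct.dag e2
      rwa [dagc, dagc, dagd] at this
    have := hx_ext _ _ d1 d2
    have := congrArg DaggerStruct.dag this
    rwa [dagd, dagd] at this
  refine ⟨?_, ?_, ?_, ?_⟩
  · -- isometry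
    intro u v
    rw [dagc, ← Category.assoc, Category.assoc u h, hmono, Category.comp_id]
  · -- orthocomplement
    intro w
    constructor
    · intro hall
      have := hall (w ≫ DaggerStruct.dag h)
      rw [dagc, ← Category.assoc] at this
      exact pos_def _ this
    · intro h0 u
      rw [dagc, ← Category.assoc, h0, zero_comp]
  · -- direct sum decomposition
    intro w
    refine ⟨(w ≫ DaggerStruct.dag h, (w ≫ DaggerStruct.dag g) ≫ g), ⟨?_, decompw w⟩, ?_⟩
    · rw [Category.assoc, hgh, comp_zero]
    · rintro ⟨p1, p2⟩ ⟨hp2, hw⟩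
      have e1 : w ≫ DaggerStruct.dag h = p1 := by
        rw [hw, daggerAdd_comp, Category.assoc, hmono, Category.comp_id, hp2,
          daggerAdd_zero]
      have e2 : w ≫ DaggerStruct.dag g = p2 ≫ DaggerStruct.dag g := by
        rw [hw, daggerAdd_comp, Category.assoc, hhg, comp_zero, zero_daggerAdd]
      have e3 : p2 = (w ≫ DaggerStruct.dag g) ≫ g := by
        apply point_ext
        · rw [hp2, Category.assoc, hgh, comp_zero]
        · rw [Category.assoc, hg, Category.comp_id, e2]
      exact Prod.ext e1.symm e3
  · -- orthoclosed
    intro w hperp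
    refine ⟨w ≫ DaggerStruct.dag h, ?_⟩
    have h0 : w ≫ DaggerStruct.dag g = 0 := by
      apply pos_def
      have := hperp ((w ≫ DaggerStruct.dag g) ≫ g)
        (by rw [Category.assoc, hgh, comp_zero])
      rw [dagc, ← Category.assoc] at this
      exact this
    conv_lhs => rw [decompw w]
    rw [h0, zero_comp, daggerAdd_zero]
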